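/- Let x, y : ℤ → ℝ be finitely supported signals, and suppose there exist ν ∈ ℤ and a real number a > 0 such that x[n] = a · y[n + ν] for all n ∈ ℤ. Then the cross-correlation function of x and y is maximized at ν; that is, (x ⋆ y)[n] ≤ (x ⋆ y)[ν] for all n ∈ ℤ. -/
import Mathlib

/-- If `x[n] = a * y[n + ν]` for all `n` with `a > 0`, then the
cross-correlation of `x` and `y` is maximized at `ν`. -/
theorem crosscorr_max_at_shift
    (x y : ℤ → ℝ)
    (hx : (Function.support x).Finite)
    (hy : (Function.support y).Finite)
    (ν : ℤ) (a : ℝ) (ha : 0 < a)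
    (hxy : ∀ n : ℤ, x n = a * y (n + ν)) :
    ∀ n : ℤ,
      (∑ᶠ m : ℤ, x m * y (m + n)) ≤ ∑ᶠ m : ℤ, x m * y (m + ν) := by
  intro n
  have hsupp : ∀ k : ℤ, (Function.support fun m => y (m + k)).Finite := by
    intro k
    have h : (Function.support fun m => y (m + k)) =
        (Equiv.addRight k) ⁻¹' (Function.support y) := by
      ext m; simp [Function.support]
    rw [h]
    exact hy.preimage (Equiv.injective _).injOn
  set s : Finset ℤ := ((hsupp ν).union (hsupp n)).toFinset with hs
  have hsub_ν : (Function.support fun m => y (m + ν)) ⊆ ↑s := by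
    intro m hm; simp [hs, Set.Finite.mem_toFinset]; left; exact hm
  have hsub_n : (Function.support fun m => y (m + n)) ⊆ ↑s := by
    intro m hm; simp [hs, Set.Finite.mem_toFinset]; right; exact hm
  have h1 : (∑ᶠ m : ℤ, x m * y (m + n)) = a * ∑ m ∈ s, y (m + ν) * y (m + n) := by
    rw [Finset.mul_sum, ← finsum_eq_sum_of_support_subset (f := fun m => a * (y (m + ν) * y (m + n)))]
    · exact finsum_congr fun m => by rw [hxy m]; ring
    · intro m hm
      apply hsub_ν
      intro h0
      apply hm
      simp [h0]
  have h2 : (∑ᶠ m : ℤ, x m * y (m + ν)) = a * ∑ m ∈ s, y (m + ν) ^ 2 := by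
    rw [Finset.mul_sum, ← finsum_eq_sum_of_support_subset (f := fun m => a * (y (m + ν) ^ 2))]
    · exact finsum_congr fun m => by rw [hxy m]; ring
    · intro m hm
      apply hsub_ν
      intro h0
      apply hm
      simp [h0]
  rw [h1, h2]
  apply mul_le_mul_of_nonneg_left _ ha.le
  -- shift invariance of sum of squares
  have hshift : ∑ m ∈ s, y (m + n) ^ 2 = ∑ m ∈ s, y (m + ν) ^ 2 := by
    have e1 : ∑ m ∈ s, y (m + n) ^ 2 = ∑ᶠ m : ℤ, y (m + n) ^ 2 := by
      rw [finsum_eq_sum_of_support_subset]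
      intro m hm
      apply hsub_n
      intro h0; apply hm; simp [h0]
    have e2 : ∑ m ∈ s, y (m + ν) ^ 2 = ∑ᶠ m : ℤ, y (m + ν) ^ 2 := by
      rw [finsum_eq_sum_of_support_subset]
      intro m hm
      apply hsub_ν
      intro h0; apply hm; simp [h0]
    have e3 : (∑ᶠ m : ℤ, y (m + n) ^ 2) = ∑ᶠ m : ℤ, y m ^ 2 :=
      finsum_comp_equiv (Equiv.addRight n) (f := fun m => y m ^ 2)
    have e4 : (∑ᶠ m : ℤ, y (m + ν) ^ 2) = ∑ᶠ m : ℤ, y m ^ 2 :=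
      finsum_comp_equiv (Equiv.addRight ν) (f := fun m => y m ^ 2)
    rw [e1, e2, e3, e4]
  have hT : (0:ℝ) ≤ ∑ m ∈ s, y (m + ν) ^ 2 :=
    Finset.sum_nonneg fun m _ => sq_nonneg _
  have hcs := Finset.sum_mul_sq_le_sq_mul_sq s (fun m => y (m + ν)) (fun m => y (m + n))
  rw [hshift] at hcs
  nlinarith [hcs, hT, Finset.sum_nonneg (s := s) (f := fun m => y (m + n) ^ 2) (fun m _ => sq_nonneg _)]
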